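/- Let S' = K[u_1,…,u_m] and S = K[x_0,…,x_n] ⊗_K S', and let T' = K[U_1,…,U_m] and T = K[X_0,…,X_n] ⊗_K T' be the corresponding rings of differential operators, acting by X_i = ∂/∂x_i and U_j = ∂/∂u_j. Let g_0,…,g_n be homogeneous elements of S' of degree d, let I be the T'-submodule of S' generated by all partial derivatives {∂(g_i) : ∂ ∈ T', 0 ≤ i ≤ n}, and let A' = T'/Ann(I), where Ann(I) = {∂ ∈ T' : ∂(h) = 0 for all h ∈ I}; I is naturally an A'-module. Set f = x_0g_0 + ⋯ + x_ng_n, a bihomogeneous polynomial of bidegree (1,d), and A = T/Ann(f). Then A is isomorphic as a K-algebra to the Nagata idealization (trivial square-zero extension) A' ⋉ I. -/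

import Mathlib

open MvPolynomial

namespace CW

variable {σ K : Type*} [CommSemiring K]

/-- A generic "monomial contraction-type" action of the polynomial ring on itself,
determined by a structure coefficient `ν c a` (the coefficient produced when the
operator monomial with exponent `a` acts on the monomial with exponent `c`). -/
noncomputable def genAct (ν : (σ →₀ ℕ) → (σ →₀ ℕ) → K) (α f : MvPolynomial σ K) :
    MvPolynomial σ K :=
  Finsupp.sum (AddMonoidAlgebra.coeff α) fun a ca =>
    Finsupp.sum (AddMonoidAlgebra.coeff f) fun c cf => monomial (c - a) (ν c a * (ca * cf))

theorem genAct_zero_left (ν : (σ →₀ ℕ) → (σ →₀ ℕ) → K) (f : MvPolynomial σ K) :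
    genAct ν 0 f = 0 :=
  Finsupp.sum_zero_index

theorem genAct_zero_right (ν : (σ →₀ ℕ) → (σ →₀ ℕ) → K) (α : MvPolynomial σ K) :
    genAct ν α 0 = 0 := by
  unfold genAct
  simp only [AddMonoidAlgebra.coeff_zero, Finsupp.sum_zero_index, Finsupp.sum_fun_zero]

theorem genAct_add_left (ν : (σ →₀ ℕ) → (σ →₀ ℕ) → K) (α β f : MvPolynomial σ K) :
    genAct ν (α + β) f = genAct ν α f + genAct ν β f := by
  unfold genAct
  apply Finsupp.sum_add_index'
  · intro a
    simp only [mul_zero, zero_mul, map_zero, Finsupp.sum_fun_zero]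
  · intro a b₁ b₂
    rw [← Finsupp.sum_add]
    apply Finsupp.sum_congr
    intro c _
    rw [add_mul, mul_add, map_add]

theorem genAct_add_right (ν : (σ →₀ ℕ) → (σ →₀ ℕ) → K) (α f g : MvPolynomial σ K) :
    genAct ν α (f + g) = genAct ν α f + genAct ν α g := by
  unfold genAct
  rw [← Finsupp.sum_add]
  apply Finsupp.sum_congr
  intro a _
  apply Finsupp.sum_add_index'
  · intro c
    simp only [mul_zero, map_zero]
  · intro c c₁ c₂
    rw [mul_add, mul_add, map_add]

theorem genAct_monomial (ν : (σ →₀ ℕ) → (σ →₀ ℕ) → K) (a c : σ →₀ ℕ) (r s : K) :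
    genAct ν (monomial a r) (monomial c s) = monomial (c - a) (ν c a * (r * s)) := by
  unfold genAct
  rw [← single_eq_monomial a r, ← single_eq_monomial c s, AddMonoidAlgebra.coeff_single,
    AddMonoidAlgebra.coeff_single]
  rw [Finsupp.sum_single_index, Finsupp.sum_single_index]
  · simp only [mul_zero, map_zero]
  · simp only [mul_zero, zero_mul, map_zero, Finsupp.sum_fun_zero]

theorem genAct_mul {ν : (σ →₀ ℕ) → (σ →₀ ℕ) → K}
    (hν : ∀ c a b, ν c (a + b) = ν c b * ν (c - b) a) (α β f : MvPolynomial σ K) :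
    genAct ν (α * β) f = genAct ν α (genAct ν β f) := by
  induction α using MvPolynomial.induction_on' with
  | add p q hp hq => rw [add_mul, genAct_add_left, hp, hq, genAct_add_left]
  | monomial a r =>
    induction β using MvPolynomial.induction_on' with
    | add p q hp hq =>
      rw [mul_add, genAct_add_left, hp, hq, ← genAct_add_right, genAct_add_left]
    | monomial b s =>
      induction f using MvPolynomial.induction_on' with
      | add p q hp hq =>
        rw [genAct_add_right, hp, hq, ← genAct_add_right, ← genAct_add_right]
      | monomial c t =>
        rw [monomial_mul, genAct_monomial, genAct_monomial, genAct_monomial,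
          show c - (a + b) = c - b - a from by rw [tsub_tsub, add_comm], hν]
        congr 1
        ring

/-- The annihilator ideal of `f` under the action `genAct ν`. -/
noncomputable def annG (ν : (σ →₀ ℕ) → (σ →₀ ℕ) → K)
    (hν : ∀ c a b, ν c (a + b) = ν c b * ν (c - b) a) (f : MvPolynomial σ K) :
    Ideal (MvPolynomial σ K) where
  carrier := {α | genAct ν α f = 0}
  zero_mem' := genAct_zero_left ν f
  add_mem' := by
    intro a b ha hb
    show genAct ν (a + b) f = 0
    rw [genAct_add_left, ha, hb, add_zero]
  smul_mem' := by
    intro c α hα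
    show genAct ν (c * α) f = 0
    rw [genAct_mul hν, hα, genAct_zero_right]

/-- Structure coefficient of the contraction (apolarity) action: `X^a` sends `x^c`
to `x^(c-a)` if `a ≤ c` and to `0` otherwise. -/
noncomputable def cnu (c a : σ →₀ ℕ) : K :=
  open scoped Classical in if a ≤ c then 1 else 0

theorem cnu_mul (c a b : σ →₀ ℕ) :
    (cnu c (a + b) : K) = cnu c b * cnu (c - b) a := by
  classical
  unfold cnu
  by_cases hb : b ≤ c
  · by_cases ha : a ≤ c - b
    · have h : a + b ≤ c := (le_tsub_iff_right hb).mp ha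
      simp [hb, ha, h]
    · have h : ¬ a + b ≤ c := fun h => ha ((le_tsub_iff_right hb).mpr h)
      simp [hb, ha, h]
  · have h : ¬ a + b ≤ c := fun h => hb (le_trans le_add_self h)
    simp [hb, h]

/-- The contraction action `α ∘ f`. -/
noncomputable def cAct (α f : MvPolynomial σ K) : MvPolynomial σ K :=
  genAct cnu α f

/-- The annihilator `Ann(f)` of `f` under the contraction action, as an ideal. -/
noncomputable def cAnn (f : MvPolynomial σ K) : Ideal (MvPolynomial σ K) :=
  annG cnu cnu_mul f

theorem mem_cAnn {f α : MvPolynomial σ K} : α ∈ cAnn f ↔ cAct α f = 0 := Iff.rfl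

/-- The `K`-submodule of polynomials all of whose monomials satisfy `P`. -/
noncomputable def bihom (K : Type*) [CommSemiring K] {σ : Type*} (P : (σ →₀ ℕ) → Prop) :
    Submodule K (MvPolynomial σ K) where
  carrier := {p | ∀ c ∈ p.support, P c}
  zero_mem' := by
    intro c hc
    simp at hc
  add_mem' := by
    classical
    intro p q hp hq c hc
    rcases Finset.mem_union.mp (MvPolynomial.support_add hc) with h | h
    · exact hp c h
    · exact hq c h
  smul_mem' := by
    intro k p hp c hc
    exact hp c (MvPolynomial.support_smul hc)

/-- The x-degree of an exponent vector. -/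
def degX {n m : ℕ} (c : (Fin (n + 1) ⊕ Fin m) →₀ ℕ) : ℕ := ∑ r, c (Sum.inl r)

/-- The u-degree of an exponent vector. -/
def degU {n m : ℕ} (c : (Fin (n + 1) ⊕ Fin m) →₀ ℕ) : ℕ := ∑ k, c (Sum.inr k)

/-- The bihomogeneous component `T_(i,j)`. -/
noncomputable def Tbi (K : Type*) [CommSemiring K] {n m : ℕ} (i j : ℕ) :
    Submodule K (MvPolynomial (Fin (n + 1) ⊕ Fin m) K) :=
  bihom K fun c => degX c = i ∧ degU c = j

/-- The bigraded component `A_(i,j)` of `A = T ⧸ Ann(f)`: the image of `T_(i,j)`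
in the quotient. -/
noncomputable def Abi {K : Type*} [Field K] {n m : ℕ}
    (f : MvPolynomial (Fin (n + 1) ⊕ Fin m) K) (i j : ℕ) :
    Submodule K (MvPolynomial (Fin (n + 1) ⊕ Fin m) K ⧸ cAnn f) :=
  (Tbi K i j).map (Ideal.Quotient.mkₐ K (cAnn f)).toLinearMap

theorem genAct_smul_right (ν : (σ →₀ ℕ) → (σ →₀ ℕ) → K) (k : K) (α f : MvPolynomial σ K) :
    genAct ν α (k • f) = k • genAct ν α f := by
  unfold genAct
  rw [Finsupp.smul_sum]
  apply Finsupp.sum_congr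
  intro a _
  rw [AddMonoidAlgebra.coeff_smul, Finsupp.sum_smul_index (fun c => by simp only [mul_zero, map_zero]),
    Finsupp.smul_sum]
  apply Finsupp.sum_congr
  intro c _
  rw [smul_monomial, smul_eq_mul]
  congr 1
  ring

theorem genAct_smul_left (ν : (σ →₀ ℕ) → (σ →₀ ℕ) → K) (k : K) (α f : MvPolynomial σ K) :
    genAct ν (k • α) f = k • genAct ν α f := by
  unfold genAct
  rw [AddMonoidAlgebra.coeff_smul, Finsupp.sum_smul_index (fun a => by
      simp only [mul_zero, zero_mul, map_zero, Finsupp.sum_fun_zero]),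
    Finsupp.smul_sum]
  apply Finsupp.sum_congr
  intro a _
  rw [Finsupp.smul_sum]
  apply Finsupp.sum_congr
  intro c _
  rw [smul_monomial, smul_eq_mul]
  congr 1
  ring

theorem genAct_one {ν : (σ →₀ ℕ) → (σ →₀ ℕ) → K} (hν : ∀ c, ν c 0 = 1)
    (f : MvPolynomial σ K) : genAct ν 1 f = f := by
  have h1 : (1 : MvPolynomial σ K) = monomial 0 1 := by
    rw [monomial_zero', C_1]
  unfold genAct
  rw [h1, ← single_eq_monomial, AddMonoidAlgebra.coeff_single, Finsupp.sum_single_index (by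
    simp only [mul_zero, zero_mul, map_zero, Finsupp.sum_fun_zero])]
  calc
    (Finsupp.sum (AddMonoidAlgebra.coeff f) fun c cf => monomial (c - 0) (ν c 0 * (1 * cf)))
        = Finsupp.sum (AddMonoidAlgebra.coeff f) fun c cf => AddMonoidAlgebra.single c cf := by
          apply Finsupp.sum_congr
          intro c _
          rw [hν, tsub_zero, one_mul, one_mul, single_eq_monomial]
    _ = f := AddMonoidAlgebra.sum_coeff_single f
theorem descFactorial_add_eq (v a b : ℕ) :
    v.descFactorial (a + b) = v.descFactorial b * (v - b).descFactorial a := by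
  induction a with
  | zero => simp
  | succ a ih =>
    have h : a + 1 + b = (a + b) + 1 := by omega
    rw [h, Nat.descFactorial_succ, ih, Nat.descFactorial_succ, Nat.sub_sub]
    ring_nf

/-- Structure coefficient of the differentiation action: the operator monomial `X^a`
sends `x^c` to `(∏ᵢ (cᵢ)(cᵢ-1)⋯(cᵢ-aᵢ+1)) x^(c-a)`. -/
noncomputable def dnu {σ K : Type*} [CommSemiring K] [Fintype σ] (c a : σ →₀ ℕ) : K :=
  ((∏ i, (c i).descFactorial (a i) : ℕ) : K)

theorem dnu_mul {σ K : Type*} [CommSemiring K] [Fintype σ] (c a b : σ →₀ ℕ) :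
    (dnu c (a + b) : K) = dnu c b * dnu (c - b) a := by
  unfold dnu
  rw [← Nat.cast_mul, ← Finset.prod_mul_distrib]
  congr 1
  apply Finset.prod_congr rfl
  intro i _
  rw [Finsupp.add_apply, Finsupp.tsub_apply, descFactorial_add_eq]

/-- The differentiation action `α(f)`, where `X_i` acts as `∂/∂x_i`. -/
noncomputable def dAct {σ K : Type*} [CommSemiring K] [Fintype σ]
    (α f : MvPolynomial σ K) : MvPolynomial σ K :=
  genAct dnu α f

/-- The annihilator `Ann(f)` of `f` under the differentiation action, as an ideal. -/
noncomputable def dAnn {σ K : Type*} [CommSemiring K] [Fintype σ]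
    (f : MvPolynomial σ K) : Ideal (MvPolynomial σ K) :=
  annG dnu dnu_mul f

theorem mem_dAnn {σ K : Type*} [CommSemiring K] [Fintype σ] {f α : MvPolynomial σ K} :
    α ∈ dAnn f ↔ dAct α f = 0 := Iff.rfl

/-- The total-degree-`k` component `A_k` of `A = T ⧸ Ann(f)` (differentiation action):
the image in the quotient of the space of homogeneous operators of order `k`. -/
noncomputable def Adeg {K : Type*} [Field K] {n m : ℕ}
    (f : MvPolynomial (Fin (n + 1) ⊕ Fin m) K) (k : ℕ) :
    Submodule K (MvPolynomial (Fin (n + 1) ⊕ Fin m) K ⧸ dAnn f) :=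
  (bihom K fun c => degX c + degU c = k).map (Ideal.Quotient.mkₐ K (dAnn f)).toLinearMap
theorem dnu_zero {σ K : Type*} [CommSemiring K] [Fintype σ] (c : σ →₀ ℕ) :
    (dnu c 0 : K) = 1 := by
  simp [dnu]

set_option synthInstance.maxHeartbeats 1000000

set_option maxHeartbeats 2000000

section Idealization

variable {K : Type*} [Field K] [CharZero K] {m : ℕ}

/-- The `T'`-submodule `I` of `S' = K[u_1,…,u_m]` generated by all the partial
derivatives of the `g_r` (as a `K`-subspace, it is spanned by the `∂(g_r)`). -/
noncomputable def derivSpan (n : ℕ) (g : Fin (n + 1) → MvPolynomial (Fin m) K) :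
    Submodule K (MvPolynomial (Fin m) K) :=
  Submodule.span K
    {h | ∃ (δ : MvPolynomial (Fin m) K) (r : Fin (n + 1)), h = dAct δ (g r)}

theorem dAct_mem_derivSpan (n : ℕ) (g : Fin (n + 1) → MvPolynomial (Fin m) K)
    (δ : MvPolynomial (Fin m) K) {h : MvPolynomial (Fin m) K}
    (hh : h ∈ derivSpan n g) : dAct δ h ∈ derivSpan n g := by
  induction hh using Submodule.span_induction with
  | mem x hx =>
    rcases hx with ⟨γ, r, rfl⟩
    exact Submodule.subset_span ⟨δ * γ, r, (genAct_mul dnu_mul δ γ (g r)).symm⟩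
  | zero =>
    rw [show dAct δ (0 : MvPolynomial (Fin m) K) = 0 from genAct_zero_right _ _]
    exact zero_mem _
  | add x y hx hy ihx ihy =>
    rw [show dAct δ (x + y) = dAct δ x + dAct δ y from genAct_add_right _ _ _ _]
    exact add_mem ihx ihy
  | smul k x hx ih =>
    rw [show dAct δ (k • x) = k • dAct δ x from genAct_smul_right _ _ _ _]
    exact Submodule.smul_mem _ _ ih

/-- `Ann(I)`, the ideal of differential operators annihilating `I`. -/
noncomputable def annDerivSpan (n : ℕ) (g : Fin (n + 1) → MvPolynomial (Fin m) K) :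
    Ideal (MvPolynomial (Fin m) K) where
  carrier := {δ | ∀ h ∈ derivSpan n g, dAct δ h = 0}
  zero_mem' := fun h _ => genAct_zero_left _ _
  add_mem' := by
    intro a b ha hb h hh
    rw [show dAct (a + b) h = dAct a h + dAct b h from genAct_add_left _ _ _ _,
      ha h hh, hb h hh, add_zero]
  smul_mem' := by
    intro c δ hδ h hh
    show dAct (c * δ) h = 0
    rw [show dAct (c * δ) h = dAct c (dAct δ h) from genAct_mul dnu_mul _ _ _,
      hδ h hh, show dAct c (0 : MvPolynomial (Fin m) K) = 0 from genAct_zero_right _ _]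

/-- `A' = T' ⧸ Ann(I)`. -/
noncomputable abbrev Aprime (n : ℕ) (g : Fin (n + 1) → MvPolynomial (Fin m) K) :=
  MvPolynomial (Fin m) K ⧸ annDerivSpan n g

/-- `I` is a module over `T'` via the differentiation action. -/
noncomputable instance derivSpan.instSMul (n : ℕ)
    (g : Fin (n + 1) → MvPolynomial (Fin m) K) :
    SMul (MvPolynomial (Fin m) K) ↥(derivSpan n g) :=
  ⟨fun δ h => ⟨dAct δ h.1, dAct_mem_derivSpan n g δ h.2⟩⟩

noncomputable instance derivSpan.instModule (n : ℕ)
    (g : Fin (n + 1) → MvPolynomial (Fin m) K) :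
    Module (MvPolynomial (Fin m) K) ↥(derivSpan n g) where
  one_smul h := Subtype.ext (genAct_one dnu_zero h.1)
  mul_smul δ γ h := Subtype.ext (genAct_mul dnu_mul δ γ h.1)
  smul_zero δ := Subtype.ext (genAct_zero_right dnu δ)
  smul_add δ h h' := Subtype.ext (genAct_add_right dnu δ h.1 h'.1)
  add_smul δ γ h := Subtype.ext (genAct_add_left dnu δ γ h.1)
  zero_smul h := Subtype.ext (genAct_zero_left dnu h.1)

theorem derivSpan.isTorsionBySet (n : ℕ) (g : Fin (n + 1) → MvPolynomial (Fin m) K) :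
    Module.IsTorsionBySet (MvPolynomial (Fin m) K) ↥(derivSpan n g)
      (annDerivSpan n g) :=
  fun x a => Subtype.ext (show dAct a.1 x.1 = (0 : MvPolynomial (Fin m) K) from
    a.2 x.1 x.2)

/-- `I` is naturally an `A'`-module. -/
noncomputable instance derivSpan.instModuleQuot (n : ℕ)
    (g : Fin (n + 1) → MvPolynomial (Fin m) K) :
    Module (Aprime n g) ↥(derivSpan n g) :=
  (derivSpan.isTorsionBySet n g).module

theorem derivSpan.smul_k_assoc (n : ℕ) (g : Fin (n + 1) → MvPolynomial (Fin m) K)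
    (k : K) (δ : MvPolynomial (Fin m) K) (h : ↥(derivSpan n g)) :
    (k • δ) • h = k • (δ • h) :=
  Subtype.ext (genAct_smul_left dnu k δ h.1)

noncomputable instance derivSpan.instTower (n : ℕ)
    (g : Fin (n + 1) → MvPolynomial (Fin m) K) :
    IsScalarTower K (Aprime n g) ↥(derivSpan n g) := by
  constructor
  intro k a h
  obtain ⟨δ, rfl⟩ := Ideal.Quotient.mk_surjective a
  have h1 : k • (Ideal.Quotient.mk (annDerivSpan n g) δ) =
      Ideal.Quotient.mk (annDerivSpan n g) (k • δ) :=
    ((Ideal.Quotient.mkₐ K (annDerivSpan n g)).toLinearMap.map_smul k δ).symm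
  rw [h1]
  show (k • δ) • h = k • (δ • h)
  exact derivSpan.smul_k_assoc n g k δ h

noncomputable instance derivSpan.instModuleOp (n : ℕ)
    (g : Fin (n + 1) → MvPolynomial (Fin m) K) :
    Module (Aprime n g)ᵐᵒᵖ ↥(derivSpan n g) :=
  Module.compHom _ ((RingHom.id (Aprime n g)).fromOpposite mul_comm)

noncomputable instance derivSpan.instCentral (n : ℕ)
    (g : Fin (n + 1) → MvPolynomial (Fin m) K) :
    IsCentralScalar (Aprime n g) ↥(derivSpan n g) :=
  ⟨fun _ _ => rfl⟩

noncomputable instance derivSpan.instSMulComm (n : ℕ)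
    (g : Fin (n + 1) → MvPolynomial (Fin m) K) :
    SMulCommClass (Aprime n g) (Aprime n g)ᵐᵒᵖ ↥(derivSpan n g) := by
  constructor
  intro a b h
  show a • (b.unop • h) = b.unop • (a • h)
  rw [← mul_smul, ← mul_smul, mul_comm]

noncomputable instance derivSpan.instTowerOp (n : ℕ)
    (g : Fin (n + 1) → MvPolynomial (Fin m) K) :
    IsScalarTower K (Aprime n g)ᵐᵒᵖ ↥(derivSpan n g) := by
  constructor
  intro k a h
  show (k • a).unop • h = k • (a.unop • h)
  rw [MulOpposite.unop_smul, smul_assoc]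


/-! ### Auxiliary material for Statement 12 -/

open scoped Classical

section SplitAux

variable {n : ℕ}

/-- The `X`-part of an exponent vector. -/
noncomputable def splitX (c : (Fin (n + 1) ⊕ Fin m) →₀ ℕ) : Fin (n + 1) →₀ ℕ :=
  (Finsupp.sumFinsuppEquivProdFinsupp c).1

/-- The `U`-part of an exponent vector. -/
noncomputable def splitU (c : (Fin (n + 1) ⊕ Fin m) →₀ ℕ) : Fin m →₀ ℕ :=
  (Finsupp.sumFinsuppEquivProdFinsupp c).2

theorem splitX_apply (c : (Fin (n + 1) ⊕ Fin m) →₀ ℕ) (r : Fin (n + 1)) :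
    splitX c r = c (Sum.inl r) :=
  Finsupp.fst_sumFinsuppEquivProdFinsupp c r

theorem splitU_apply (c : (Fin (n + 1) ⊕ Fin m) →₀ ℕ) (u : Fin m) :
    splitU c u = c (Sum.inr u) :=
  Finsupp.snd_sumFinsuppEquivProdFinsupp c u

@[simp] theorem mapDomain_inl_apply_inl (a : Fin (n + 1) →₀ ℕ) (r : Fin (n + 1)) :
    Finsupp.mapDomain (Sum.inl : Fin (n + 1) → Fin (n + 1) ⊕ Fin m) a (Sum.inl r) = a r :=
  Finsupp.mapDomain_apply Sum.inl_injective a r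

@[simp] theorem mapDomain_inl_apply_inr (a : Fin (n + 1) →₀ ℕ) (u : Fin m) :
    Finsupp.mapDomain (Sum.inl : Fin (n + 1) → Fin (n + 1) ⊕ Fin m) a (Sum.inr u) = 0 :=
  Finsupp.mapDomain_notin_range a _ (by simp)

@[simp] theorem mapDomain_inr_apply_inl (b : Fin m →₀ ℕ) (r : Fin (n + 1)) :
    Finsupp.mapDomain (Sum.inr : Fin m → Fin (n + 1) ⊕ Fin m) b (Sum.inl r) = 0 :=
  Finsupp.mapDomain_notin_range b _ (by simp)

@[simp] theorem mapDomain_inr_apply_inr (b : Fin m →₀ ℕ) (u : Fin m) :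
    Finsupp.mapDomain (Sum.inr : Fin m → Fin (n + 1) ⊕ Fin m) b (Sum.inr u) = b u :=
  Finsupp.mapDomain_apply Sum.inr_injective b u

theorem split_recomb (c : (Fin (n + 1) ⊕ Fin m) →₀ ℕ) :
    Finsupp.mapDomain Sum.inl (splitX c) + Finsupp.mapDomain Sum.inr (splitU c) = c := by
  ext s
  rw [Finsupp.add_apply]
  cases s with
  | inl r => rw [mapDomain_inl_apply_inl, mapDomain_inr_apply_inl, splitX_apply, add_zero]
  | inr u => rw [mapDomain_inl_apply_inr, mapDomain_inr_apply_inr, splitU_apply, zero_add]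

theorem splitX_sum_inl_single (s : Fin (n + 1)) (e : Fin m →₀ ℕ) :
    splitX (Finsupp.single (Sum.inl s : Fin (n + 1) ⊕ Fin m) 1 + Finsupp.mapDomain Sum.inr e)
      = Finsupp.single s 1 := by
  ext r
  rw [splitX_apply, Finsupp.add_apply, mapDomain_inr_apply_inl, add_zero,
    Finsupp.single_apply, Finsupp.single_apply]
  simp [Sum.inl.injEq]

theorem splitU_sum_inl_single (s : Fin (n + 1)) (e : Fin m →₀ ℕ) :
    splitU (Finsupp.single (Sum.inl s : Fin (n + 1) ⊕ Fin m) 1 + Finsupp.mapDomain Sum.inr e)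
      = e := by
  ext u
  rw [splitU_apply, Finsupp.add_apply, mapDomain_inr_apply_inr, Finsupp.single_apply]
  simp

theorem splitX_recomb (a : Fin (n + 1) →₀ ℕ) (b : Fin m →₀ ℕ) :
    splitX (Finsupp.mapDomain (Sum.inl : Fin (n + 1) → Fin (n + 1) ⊕ Fin m) a
      + Finsupp.mapDomain Sum.inr b) = a := by
  ext r
  rw [splitX_apply, Finsupp.add_apply, mapDomain_inl_apply_inl, mapDomain_inr_apply_inl,
    add_zero]

theorem splitU_recomb (a : Fin (n + 1) →₀ ℕ) (b : Fin m →₀ ℕ) :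
    splitU (Finsupp.mapDomain (Sum.inl : Fin (n + 1) → Fin (n + 1) ⊕ Fin m) a
      + Finsupp.mapDomain Sum.inr b) = b := by
  ext u
  rw [splitU_apply, Finsupp.add_apply, mapDomain_inl_apply_inr, mapDomain_inr_apply_inr,
    zero_add]

theorem dnu_split (d c : (Fin (n + 1) ⊕ Fin m) →₀ ℕ) :
    (dnu d c : K) = dnu (splitX d) (splitX c) * dnu (splitU d) (splitU c) := by
  unfold dnu
  rw [← Nat.cast_mul]
  congr 1
  rw [Fintype.prod_sum_type]
  simp only [splitX_apply, splitU_apply]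

theorem dnu_single_self (s : Fin (n + 1)) :
    (dnu (Finsupp.single s 1) (Finsupp.single s 1) : K) = 1 := by
  unfold dnu
  rw [Finset.prod_eq_one fun r _ => ?_, Nat.cast_one]
  rcases eq_or_ne s r with rfl | h
  · simp [Finsupp.single_apply]
  · simp [Finsupp.single_apply, h]

theorem dnu_single_ne {s r0 : Fin (n + 1)} (h : r0 ≠ s) :
    (dnu (Finsupp.single s 1) (Finsupp.single r0 1) : K) = 0 := by
  unfold dnu
  rw [Finset.prod_eq_zero (Finset.mem_univ r0) ?_, Nat.cast_zero]
  simp [Finsupp.single_apply, Ne.symm h]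

theorem dnu_single_big (s : Fin (n + 1)) (a : Fin (n + 1) →₀ ℕ)
    (h2 : 2 ≤ ∑ r, a r) : (dnu (Finsupp.single s 1) a : K) = 0 := by
  unfold dnu
  by_cases hs : 2 ≤ a s
  · rw [Finset.prod_eq_zero (Finset.mem_univ s) ?_, Nat.cast_zero]
    rw [Finsupp.single_apply, if_pos rfl]
    exact Nat.descFactorial_eq_zero_iff_lt.mpr (by omega)
  · have herase : a s + ∑ r ∈ Finset.univ.erase s, a r = ∑ r, a r :=
      Finset.add_sum_erase _ a (Finset.mem_univ s)
    have hne : ∃ r ∈ Finset.univ.erase s, a r ≠ 0 := by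
      by_contra hcon
      push_neg at hcon
      rw [Finset.sum_eq_zero hcon] at herase
      omega
    obtain ⟨r, hrmem, hr⟩ := hne
    have hrs : s ≠ r := fun h => (Finset.mem_erase.mp hrmem).1 h.symm
    rw [Finset.prod_eq_zero (Finset.mem_univ r) ?_, Nat.cast_zero]
    rw [Finsupp.single_apply, if_neg hrs]
    obtain ⟨j, hj⟩ : ∃ j, a r = j + 1 := ⟨a r - 1, by omega⟩
    rw [hj]
    exact Nat.zero_descFactorial_succ j

theorem sum_single_one (r0 : Fin (n + 1)) :
    ∑ r, (Finsupp.single r0 1 : Fin (n + 1) →₀ ℕ) r = 1 := by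
  simp [Finsupp.single_apply]

theorem weight_cases (a : Fin (n + 1) →₀ ℕ) :
    a = 0 ∨ (∃ r, a = Finsupp.single r 1) ∨ 2 ≤ ∑ r, a r := by
  rcases Nat.lt_or_ge (∑ r, a r) 2 with h | h
  · by_cases h0 : ∑ r, a r = 0
    · left
      ext r
      exact Finset.sum_eq_zero_iff.mp h0 r (Finset.mem_univ r)
    · have h0 : ∑ r, a r = 1 := by omega
      right; left
      have hex : ∃ r, a r ≠ 0 := by
        by_contra hcon
        push_neg at hcon
        rw [Finset.sum_eq_zero fun r _ => hcon r] at h0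
        omega
      obtain ⟨r, hr⟩ := hex
      have hle : a r ≤ ∑ r', a r' :=
        Finset.single_le_sum (fun i _ => Nat.zero_le _) (Finset.mem_univ r)
      have harr : a r = 1 := by omega
      have hothers : ∑ r' ∈ Finset.univ.erase r, a r' = 0 := by
        have := Finset.add_sum_erase Finset.univ a (Finset.mem_univ r)
        omega
      refine ⟨r, ?_⟩
      ext r'
      rcases eq_or_ne r' r with rfl | hne
      · simp [harr, Finsupp.single_apply]
      · have : a r' = 0 := by
          have := Finset.sum_eq_zero_iff.mp hothers r'
            (Finset.mem_erase.mpr ⟨hne, Finset.mem_univ r'⟩)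
          exact this
        simp [this, Finsupp.single_apply, Ne.symm hne]
  · right; right; exact h

theorem dAct_monomial {τ : Type*} [Fintype τ] (a c : τ →₀ ℕ) (r s : K) :
    dAct (monomial a r) (monomial c s) = monomial (c - a) (dnu c a * (r * s)) :=
  genAct_monomial dnu a c r s

theorem dAct_zero_left {τ : Type*} [Fintype τ] (f : MvPolynomial τ K) :
    dAct (0 : MvPolynomial τ K) f = 0 :=
  genAct_zero_left dnu f

theorem dAct_zero_right {τ : Type*} [Fintype τ] (α : MvPolynomial τ K) :
    dAct α (0 : MvPolynomial τ K) = 0 :=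
  genAct_zero_right dnu α

theorem dAct_add_left {τ : Type*} [Fintype τ] (α β f : MvPolynomial τ K) :
    dAct (α + β) f = dAct α f + dAct β f :=
  genAct_add_left dnu α β f

theorem dAct_add_right {τ : Type*} [Fintype τ] (α f f' : MvPolynomial τ K) :
    dAct α (f + f') = dAct α f + dAct α f' :=
  genAct_add_right dnu α f f'

theorem dAct_smul_right {τ : Type*} [Fintype τ] (k : K) (α f : MvPolynomial τ K) :
    dAct α (k • f) = k • dAct α f :=
  genAct_smul_right dnu k α f

theorem dAct_mul {τ : Type*} [Fintype τ] (α β f : MvPolynomial τ K) :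
    dAct (α * β) f = dAct α (dAct β f) :=
  genAct_mul dnu_mul α β f

/-- The linear projection extracting the coefficient (in `S'`) of `X^a`. -/
noncomputable def part (a : Fin (n + 1) →₀ ℕ) :
    MvPolynomial (Fin (n + 1) ⊕ Fin m) K →ₗ[K] MvPolynomial (Fin m) K :=
  (Finsupp.lsum K fun c =>
    if splitX c = a then (monomial (splitU c) : K →ₗ[K] MvPolynomial (Fin m) K) else 0).comp
    ({ toFun := AddMonoidAlgebra.coeff, map_add' := fun _ _ => rfl, map_smul' := fun _ _ => by simp only [AddMonoidAlgebra.coeff_smul, RingHom.id_apply] } :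
      MvPolynomial (Fin (n + 1) ⊕ Fin m) K →ₗ[K] ((Fin (n + 1) ⊕ Fin m →₀ ℕ) →₀ K))

theorem part_monomial (a : Fin (n + 1) →₀ ℕ) (c : (Fin (n + 1) ⊕ Fin m) →₀ ℕ) (k : K) :
    part a (monomial c k) = if splitX c = a then monomial (splitU c) k else 0 := by
  have h : part a (monomial c k) = Finsupp.sum (AddMonoidAlgebra.coeff (monomial c k)) fun c' k' =>
      (if splitX c' = a then (monomial (splitU c') : K →ₗ[K] MvPolynomial (Fin m) K)
        else 0) k' := rfl
  rw [h, ← single_eq_monomial, AddMonoidAlgebra.coeff_single, Finsupp.sum_single_index]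
  · split_ifs <;> simp
  · split_ifs <;> simp

/-- `δ ↦ δ(h)` as a linear map. -/
noncomputable def dActL (h : MvPolynomial (Fin m) K) :
    MvPolynomial (Fin m) K →ₗ[K] MvPolynomial (Fin m) K where
  toFun δ := dAct δ h
  map_add' a b := genAct_add_left dnu a b h
  map_smul' k a := genAct_smul_left dnu k a h


end SplitAux


section PhiAux

variable (n : ℕ) (g : Fin (n + 1) → MvPolynomial (Fin m) K)

/-- `g r` as an element of `I`. -/
noncomputable def gI (r : Fin (n + 1)) : ↥(derivSpan n g) :=
  ⟨g r, Submodule.subset_span ⟨1, r, (genAct_one dnu_zero (g r)).symm⟩⟩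

theorem mem_derivSpan_dAct (δ : MvPolynomial (Fin m) K) (r : Fin (n + 1)) :
    dAct δ (g r) ∈ derivSpan n g :=
  Submodule.subset_span ⟨δ, r, rfl⟩

/-- Values of the structural algebra map on variables. -/
noncomputable def phiVar : Fin (n + 1) ⊕ Fin m →
    TrivSqZeroExt (Aprime n g) ↥(derivSpan n g) :=
  Sum.elim (fun r => TrivSqZeroExt.inr (gI n g r))
    (fun u => TrivSqZeroExt.inl (Ideal.Quotient.mk (annDerivSpan n g) (X u)))

/-- The structural algebra map `T → A' ⋉ I`. -/
noncomputable def Phi : MvPolynomial (Fin (n + 1) ⊕ Fin m) K →ₐ[K]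
    TrivSqZeroExt (Aprime n g) ↥(derivSpan n g) :=
  aeval (phiVar n g)

/-- `inl` as a `K`-algebra hom. -/
noncomputable def inlAH : Aprime n g →ₐ[K]
    TrivSqZeroExt (Aprime n g) ↥(derivSpan n g) :=
  { TrivSqZeroExt.inlHom (Aprime n g) ↥(derivSpan n g) with
    commutes' := fun k => (TrivSqZeroExt.algebraMap_eq_inl' _ _ _ k).symm }

theorem Phi_rename (p : MvPolynomial (Fin m) K) :
    Phi n g (rename Sum.inr p)
      = TrivSqZeroExt.inl (Ideal.Quotient.mk (annDerivSpan n g) p) := by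
  have h : (Phi n g).comp (rename Sum.inr) =
      (inlAH n g).comp (Ideal.Quotient.mkₐ K (annDerivSpan n g)) := by
    apply MvPolynomial.algHom_ext
    intro u
    simp only [AlgHom.comp_apply, rename_X, Ideal.Quotient.mkₐ_eq_mk]
    simp only [Phi, aeval_X]
    rfl
  have h2 := AlgHom.congr_fun h p
  exact h2

theorem mk_smul_I (δ : MvPolynomial (Fin m) K) (x : ↥(derivSpan n g)) :
    (Ideal.Quotient.mk (annDerivSpan n g) δ) • x
      = ⟨dAct δ x.1, dAct_mem_derivSpan n g δ x.2⟩ := rfl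

/-- The "inr"-component of the structural map, as a linear map into `S'`. -/
noncomputable def sndV : MvPolynomial (Fin (n + 1) ⊕ Fin m) K →ₗ[K]
    MvPolynomial (Fin m) K :=
  ∑ r, (dActL (g r)).comp (part (Finsupp.single r 1))

theorem sndV_apply (δ : MvPolynomial (Fin (n + 1) ⊕ Fin m) K) :
    sndV n g δ = ∑ r, dAct (part (Finsupp.single r 1) δ) (g r) := by
  simp [sndV, dActL]
  rfl

theorem sndV_mem (δ : MvPolynomial (Fin (n + 1) ⊕ Fin m) K) :
    sndV n g δ ∈ derivSpan n g := by
  rw [sndV_apply]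
  exact Submodule.sum_mem _ fun r _ => mem_derivSpan_dAct n g _ r

/-- The "inr"-component of the structural map, as a linear map into `I`. -/
noncomputable def sndC : MvPolynomial (Fin (n + 1) ⊕ Fin m) K →ₗ[K]
    ↥(derivSpan n g) :=
  LinearMap.codRestrict (derivSpan n g) (sndV n g) (sndV_mem n g)

theorem sndC_coe (δ : MvPolynomial (Fin (n + 1) ⊕ Fin m) K) :
    (sndC n g δ : MvPolynomial (Fin m) K) = sndV n g δ := rfl

theorem inr_pow_big (x : ↥(derivSpan n g)) {j : ℕ} (hj : 2 ≤ j) :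
    (TrivSqZeroExt.inr x : TrivSqZeroExt (Aprime n g) ↥(derivSpan n g)) ^ j = 0 := by
  obtain ⟨t, rfl⟩ : ∃ t, j = 2 + t := ⟨j - 2, by omega⟩
  rw [pow_add, pow_two, TrivSqZeroExt.inr_mul_inr, zero_mul]

theorem prod_inr_pow (x : Fin (n + 1) → ↥(derivSpan n g)) (a : Fin (n + 1) →₀ ℕ)
    (h2 : 2 ≤ ∑ r, a r) :
    ∏ r, (TrivSqZeroExt.inr (x r) :
      TrivSqZeroExt (Aprime n g) ↥(derivSpan n g)) ^ a r = 0 := by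
  obtain ⟨r, hr⟩ : ∃ r, a r ≠ 0 := by
    by_contra hcon
    push_neg at hcon
    rw [Finset.sum_eq_zero fun r _ => hcon r] at h2
    omega
  by_cases hbig : 2 ≤ a r
  · exact Finset.prod_eq_zero (Finset.mem_univ r) (inr_pow_big n g (x r) hbig)
  · have har : a r = 1 := by omega
    have hothers : 1 ≤ ∑ r' ∈ Finset.univ.erase r, a r' := by
      have := Finset.add_sum_erase Finset.univ a (Finset.mem_univ r)
      omega
    obtain ⟨r', hr'mem, hr'⟩ : ∃ r' ∈ Finset.univ.erase r, a r' ≠ 0 := by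
      by_contra hcon
      push_neg at hcon
      rw [Finset.sum_eq_zero hcon] at hothers
      omega
    obtain ⟨j, hj⟩ : ∃ j, a r' = j + 1 := ⟨a r' - 1, by omega⟩
    rw [← Finset.mul_prod_erase _ _ (Finset.mem_univ r),
      ← Finset.mul_prod_erase _ _ hr'mem, ← mul_assoc, har, pow_one, hj, pow_succ,
      ← mul_assoc, mul_comm (TrivSqZeroExt.inr (x r)) _, mul_assoc _ _ (TrivSqZeroExt.inr (x r')),
      TrivSqZeroExt.inr_mul_inr, mul_zero, zero_mul]

theorem Phi_monomial_X (a : Fin (n + 1) →₀ ℕ) :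
    Phi n g (monomial (Finsupp.mapDomain Sum.inl a) 1)
      = ∏ r, (TrivSqZeroExt.inr (gI n g r) :
          TrivSqZeroExt (Aprime n g) ↥(derivSpan n g)) ^ a r := by
  simp only [Phi, aeval_monomial, map_one, one_mul]
  rw [Finsupp.prod_mapDomain_index_inj Sum.inl_injective]
  rw [Finsupp.prod_fintype _ _ fun r => pow_zero _]
  rfl

theorem Phi_apply (δ : MvPolynomial (Fin (n + 1) ⊕ Fin m) K) :
    Phi n g δ
      = TrivSqZeroExt.inl (Ideal.Quotient.mk (annDerivSpan n g) (part 0 δ))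
        + TrivSqZeroExt.inr (sndC n g δ) := by
  induction δ using MvPolynomial.induction_on' with
  | add p q hp hq =>
    rw [map_add, hp, hq, map_add, map_add, map_add, TrivSqZeroExt.inl_add,
      TrivSqZeroExt.inr_add]
    abel
  | monomial c k =>
    have hc : (monomial c k : MvPolynomial (Fin (n + 1) ⊕ Fin m) K)
        = monomial (Finsupp.mapDomain Sum.inl (splitX c)) 1
          * monomial (Finsupp.mapDomain Sum.inr (splitU c)) k := by
      rw [monomial_mul, one_mul, split_recomb]
    have hU : Phi n g (monomial (Finsupp.mapDomain Sum.inr (splitU c)) k)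
        = TrivSqZeroExt.inl
            (Ideal.Quotient.mk (annDerivSpan n g) (monomial (splitU c) k)) := by
      rw [← rename_monomial, Phi_rename]
    have hsndc : ∀ (hX : splitX c ≠ 0), sndC n g (monomial c k)
        = if h : ∃ r0, splitX c = Finsupp.single r0 1 then
            ⟨dAct (monomial (splitU c) k) (g h.choose),
              mem_derivSpan_dAct n g _ _⟩ else 0 := by
      intro hX
      apply Subtype.ext
      rw [sndC_coe, sndV_apply]
      split_ifs with hex
      · obtain hspec := hex.choose_spec
        rw [Finset.sum_eq_single hex.choose ?_ ?_]
        · rw [part_monomial, if_pos hspec]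
        · intro b _ hb
          rw [part_monomial, if_neg, dAct_zero_left]
          rw [hspec]
          intro hcon
          exact hb ((Finsupp.single_left_inj one_ne_zero).mp hcon).symm
        · intro habs
          exact absurd (Finset.mem_univ _) habs
      · push_neg at hex
        rw [Submodule.coe_zero]
        apply Finset.sum_eq_zero
        intro r _
        rw [part_monomial, if_neg (hex r), dAct_zero_left]
    rcases weight_cases (splitX c) with h0 | ⟨r0, hsing⟩ | hbig
    · -- no X part
      have hc0 : c = Finsupp.mapDomain Sum.inr (splitU c) := by
        have := split_recomb c
        rw [h0] at this
        simpa using this.symm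
      have hPhi : Phi n g (monomial c k)
          = TrivSqZeroExt.inl
              (Ideal.Quotient.mk (annDerivSpan n g) (monomial (splitU c) k)) := by
        conv_lhs => rw [hc0, ← rename_monomial]
        rw [Phi_rename]
      have hpart : part 0 (monomial c k) = monomial (splitU c) k := by
        rw [part_monomial, if_pos h0]
      have hsnd : sndC n g (monomial c k) = 0 := by
        apply Subtype.ext
        rw [sndC_coe, sndV_apply, Submodule.coe_zero]
        apply Finset.sum_eq_zero
        intro r _
        rw [part_monomial, if_neg, dAct_zero_left]
        rw [h0]
        exact fun hcon => one_ne_zero (Finsupp.single_eq_zero.mp hcon.symm)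
      rw [hPhi, hpart, hsnd, TrivSqZeroExt.inr_zero, add_zero]
    · -- exactly one X, exponent 1
      have hXne : splitX c ≠ 0 := by
        rw [hsing]; exact fun hcon => one_ne_zero (Finsupp.single_eq_zero.mp hcon)
      have hprod : ∏ r, (TrivSqZeroExt.inr (gI n g r) :
          TrivSqZeroExt (Aprime n g) ↥(derivSpan n g))
            ^ (splitX c) r
          = TrivSqZeroExt.inr (gI n g r0) := by
        rw [hsing]
        rw [Finset.prod_eq_single r0 (fun b _ hb => by
            rw [Finsupp.single_apply, if_neg fun h => hb h.symm, pow_zero])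
          (fun habs => absurd (Finset.mem_univ r0) habs)]
        rw [Finsupp.single_apply, if_pos rfl, pow_one]
      rw [hc, map_mul, Phi_monomial_X, hU, hprod, TrivSqZeroExt.inr_mul_inl,
        op_smul_eq_smul, mk_smul_I]
      have hpart : part 0 (monomial c k) = 0 := by
        rw [part_monomial, if_neg]
        rw [hsing]
        exact fun hcon => one_ne_zero (Finsupp.single_eq_zero.mp hcon)
      rw [← hc, hpart, map_zero, TrivSqZeroExt.inl_zero, zero_add]
      rw [hsndc hXne]
      have hex : ∃ r1, splitX c = Finsupp.single r1 1 := ⟨r0, hsing⟩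
      rw [dif_pos hex]
      have : hex.choose = r0 := by
        have h1 := hex.choose_spec
        exact (Finsupp.single_left_inj one_ne_zero).mp (h1.symm.trans hsing)
      congr 1
      apply Subtype.ext
      simp only [gI]
      rw [this]
    · -- at least two X's
      have hXne : splitX c ≠ 0 := by
        intro hcon
        rw [hcon] at hbig
        simp at hbig
      rw [hc, map_mul, Phi_monomial_X, prod_inr_pow n g _ _ hbig, zero_mul]
      have hpart : part 0 (monomial c k) = 0 := by
        rw [part_monomial, if_neg hXne]
      have hsnd : sndC n g (monomial c k) = 0 := by
        rw [hsndc hXne, dif_neg]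
        rintro ⟨r1, hr1⟩
        rw [hr1, sum_single_one] at hbig
        omega
      rw [← hc, hpart, hsnd, map_zero, TrivSqZeroExt.inl_zero,
        TrivSqZeroExt.inr_zero, add_zero]

end PhiAux


section KerAux

variable (n : ℕ) (g : Fin (n + 1) → MvPolynomial (Fin m) K)

theorem X_mul_rename_monomial (s : Fin (n + 1)) (e' : Fin m →₀ ℕ) (t' : K) :
    (X (Sum.inl s) : MvPolynomial (Fin (n + 1) ⊕ Fin m) K)
        * rename Sum.inr (monomial e' t')
      = monomial (Finsupp.single (Sum.inl s) 1 + Finsupp.mapDomain Sum.inr e') t' := by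
  rw [rename_monomial,
    show (X (Sum.inl s) : MvPolynomial (Fin (n + 1) ⊕ Fin m) K)
      = monomial (Finsupp.single (Sum.inl s) 1) 1 from rfl,
    monomial_mul, one_mul]

theorem tsub_exp1 (s : Fin (n + 1)) (e b : Fin m →₀ ℕ) :
    (Finsupp.single (Sum.inl s : Fin (n + 1) ⊕ Fin m) 1 + Finsupp.mapDomain Sum.inr e)
        - Finsupp.mapDomain Sum.inr b
      = Finsupp.single (Sum.inl s) 1 + Finsupp.mapDomain Sum.inr (e - b) := by
  ext x
  cases x with
  | inl r => simp [Finsupp.tsub_apply, Finsupp.single_apply]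
  | inr u => simp [Finsupp.tsub_apply, Finsupp.single_apply]

theorem tsub_exp2 (s : Fin (n + 1)) (e b : Fin m →₀ ℕ) :
    (Finsupp.single (Sum.inl s : Fin (n + 1) ⊕ Fin m) 1 + Finsupp.mapDomain Sum.inr e)
        - (Finsupp.single (Sum.inl s) 1 + Finsupp.mapDomain Sum.inr b)
      = Finsupp.mapDomain Sum.inr (e - b) := by
  ext x
  cases x with
  | inl r => simp [Finsupp.tsub_apply, Finsupp.single_apply]
  | inr u => simp [Finsupp.tsub_apply, Finsupp.single_apply]

theorem dAct_mono_X_mul (s : Fin (n + 1)) (c : (Fin (n + 1) ⊕ Fin m) →₀ ℕ) (k : K)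
    (h : MvPolynomial (Fin m) K) :
    dAct (monomial c k)
        ((X (Sum.inl s) : MvPolynomial (Fin (n + 1) ⊕ Fin m) K) * rename Sum.inr h)
      = if splitX c = 0 then
          (X (Sum.inl s)) * rename Sum.inr (dAct (monomial (splitU c) k) h)
        else if splitX c = Finsupp.single s 1 then
          rename Sum.inr (dAct (monomial (splitU c) k) h)
        else 0 := by
  induction h using MvPolynomial.induction_on' with
  | add p q hp hq =>
    rw [map_add, mul_add, dAct_add_right, hp, hq]
    split_ifs <;> simp [dAct_add_right, map_add, mul_add]
  | monomial e t =>
    rw [X_mul_rename_monomial, dAct_monomial, dnu_split, splitX_sum_inl_single,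
      splitU_sum_inl_single]
    have hc := (split_recomb c).symm
    rcases weight_cases (splitX c) with h0 | ⟨r0, hsing⟩ | hbig
    · rw [if_pos h0]
      have hcc : c = Finsupp.mapDomain Sum.inr (splitU c) := by
        conv_lhs => rw [hc]
        rw [h0, Finsupp.mapDomain_zero, zero_add]
      have hexp : (Finsupp.single (Sum.inl s : Fin (n + 1) ⊕ Fin m) 1
            + Finsupp.mapDomain Sum.inr e) - c
          = Finsupp.single (Sum.inl s) 1 + Finsupp.mapDomain Sum.inr (e - splitU c) := by
        conv_lhs => rw [hcc]
        exact tsub_exp1 n s e (splitU c)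
      rw [hexp, h0, dnu_zero, one_mul, dAct_monomial, X_mul_rename_monomial]
    · have hne0 : splitX c ≠ 0 := by
        rw [hsing]; exact fun hcon => one_ne_zero (Finsupp.single_eq_zero.mp hcon)
      rcases eq_or_ne r0 s with rfl | hne
      · rw [if_neg hne0, if_pos hsing]
        have hcc : c = Finsupp.single (Sum.inl r0) 1
            + Finsupp.mapDomain Sum.inr (splitU c) := by
          conv_lhs => rw [hc]
          rw [hsing, Finsupp.mapDomain_single]
        have hexp : (Finsupp.single (Sum.inl r0 : Fin (n + 1) ⊕ Fin m) 1
              + Finsupp.mapDomain Sum.inr e) - c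
            = Finsupp.mapDomain Sum.inr (e - splitU c) := by
          conv_lhs => rw [hcc]
          exact tsub_exp2 n r0 e (splitU c)
        rw [hexp, hsing, dnu_single_self, one_mul, dAct_monomial, rename_monomial]
      · rw [if_neg hne0, if_neg (by
          rw [hsing]
          exact fun hcon => hne ((Finsupp.single_left_inj one_ne_zero).mp hcon))]
        rw [hsing, dnu_single_ne hne, zero_mul, zero_mul, monomial_zero]
    · have hne0 : splitX c ≠ 0 := by
        intro hcon; rw [hcon] at hbig; simp at hbig
      rw [if_neg hne0, if_neg (by
        intro hcon; rw [hcon, sum_single_one] at hbig; omega)]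
      rw [dnu_single_big s _ hbig, zero_mul, zero_mul, monomial_zero]

theorem dAct_f_eq (f : MvPolynomial (Fin (n + 1) ⊕ Fin m) K)
    (hf : f = ∑ r, X (Sum.inl r) * rename Sum.inr (g r))
    (δ : MvPolynomial (Fin (n + 1) ⊕ Fin m) K) :
    dAct δ f
      = (∑ s, (X (Sum.inl s) : MvPolynomial (Fin (n + 1) ⊕ Fin m) K)
          * rename Sum.inr (dAct (part 0 δ) (g s)))
        + rename Sum.inr (sndV n g δ) := by
  subst hf
  induction δ using MvPolynomial.induction_on' with
  | add p q hp hq =>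
    rw [dAct_add_left, hp, hq, map_add (part 0), map_add (sndV n g)]
    simp only [dAct_add_left, mul_add, map_add, Finset.sum_add_distrib]
    abel
  | monomial c k =>
    have hsum : dAct (monomial c k)
        (∑ r, (X (Sum.inl r) : MvPolynomial (Fin (n + 1) ⊕ Fin m) K)
          * rename Sum.inr (g r))
        = ∑ r, dAct (monomial c k)
            ((X (Sum.inl r) : MvPolynomial (Fin (n + 1) ⊕ Fin m) K)
              * rename Sum.inr (g r)) :=
      map_sum (AddMonoidHom.mk' (fun p => dAct (monomial c k) p)
        (fun p q => dAct_add_right _ p q)) _ _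
    rw [hsum, Finset.sum_congr rfl fun s _ => dAct_mono_X_mul n s c k (g s), sndV_apply]
    rcases weight_cases (splitX c) with h0 | ⟨r0, hsing⟩ | hbig
    · rw [Finset.sum_congr rfl fun s _ => if_pos h0]
      have h2 : ∑ r, dAct (part (Finsupp.single r 1) (monomial c k)) (g r) = 0 := by
        apply Finset.sum_eq_zero
        intro r _
        rw [part_monomial, if_neg (by
          rw [h0]
          exact fun hcon => one_ne_zero (Finsupp.single_eq_zero.mp hcon.symm)),
          dAct_zero_left]
      rw [h2, map_zero, add_zero, part_monomial, if_pos h0]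
    · have hne0 : splitX c ≠ 0 := by
        rw [hsing]; exact fun hcon => one_ne_zero (Finsupp.single_eq_zero.mp hcon)
      rw [Finset.sum_eq_single r0 (fun b _ hb => by
          rw [if_neg hne0, if_neg (by
            rw [hsing]
            exact fun hcon =>
              hb ((Finsupp.single_left_inj one_ne_zero).mp hcon.symm))])
        (fun habs => absurd (Finset.mem_univ r0) habs)]
      rw [if_neg hne0, if_pos hsing]
      rw [part_monomial, if_neg hne0]
      simp only [dAct_zero_left, map_zero, mul_zero, Finset.sum_const_zero, zero_add]
      rw [Finset.sum_eq_single r0 (fun b _ hb => by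
          rw [part_monomial, if_neg (by
            rw [hsing]
            exact fun hcon =>
              hb ((Finsupp.single_left_inj one_ne_zero).mp hcon).symm),
            dAct_zero_left])
        (fun habs => absurd (Finset.mem_univ r0) habs)]
      rw [part_monomial, if_pos hsing]
    · have hne0 : splitX c ≠ 0 := by
        intro hcon; rw [hcon] at hbig; simp at hbig
      rw [Finset.sum_congr rfl fun s _ => by
        rw [if_neg hne0, if_neg (by
          intro hcon; rw [hcon, sum_single_one] at hbig; omega)]]
      rw [part_monomial, if_neg hne0]
      have h2 : ∑ r, dAct (part (Finsupp.single r 1) (monomial c k)) (g r) = 0 := by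
        apply Finset.sum_eq_zero
        intro r _
        rw [part_monomial, if_neg (by
          intro hcon; rw [hcon, sum_single_one] at hbig; omega), dAct_zero_left]
      rw [h2, map_zero, add_zero]
      simp only [dAct_zero_left, map_zero, mul_zero, Finset.sum_const_zero]

theorem sep_zero (h : Fin (n + 1) → MvPolynomial (Fin m) K)
    (h' : MvPolynomial (Fin m) K)
    (H : (∑ s, (X (Sum.inl s) : MvPolynomial (Fin (n + 1) ⊕ Fin m) K)
        * rename Sum.inr (h s)) + rename Sum.inr h' = 0) :
    (∀ s, h s = 0) ∧ h' = 0 := by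
  have key : ∀ v : Fin (n + 1) → MvPolynomial (Fin m) K,
      (aeval (Sum.elim v X) : MvPolynomial (Fin (n + 1) ⊕ Fin m) K →ₐ[K]
          MvPolynomial (Fin m) K)
        ((∑ s, (X (Sum.inl s) : MvPolynomial (Fin (n + 1) ⊕ Fin m) K)
          * rename Sum.inr (h s)) + rename Sum.inr h')
      = (∑ s, v s * h s) + h' := by
    intro v
    rw [map_add, map_sum]
    congr 1
    · apply Finset.sum_congr rfl
      intro s _
      rw [map_mul, aeval_X, Sum.elim_inl, aeval_rename, Sum.elim_comp_inr, aeval_X_left_apply]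
    · rw [aeval_rename, Sum.elim_comp_inr, aeval_X_left_apply]
  have h'0 : h' = 0 := by
    have hk := key fun _ => 0
    rw [H, map_zero] at hk
    simpa using hk.symm
  refine ⟨?_, h'0⟩
  intro s0
  have hk := key fun r => if r = s0 then 1 else 0
  rw [H, map_zero, h'0, add_zero] at hk
  rw [Finset.sum_congr rfl (fun s _ => by rw [ite_mul, one_mul, zero_mul]),
    Finset.sum_ite_eq' Finset.univ s0 h, if_pos (Finset.mem_univ s0)] at hk
  exact hk.symm

theorem mem_annDerivSpan_iff (δ : MvPolynomial (Fin m) K) :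
    δ ∈ annDerivSpan n g ↔ ∀ s, dAct δ (g s) = 0 := by
  constructor
  · intro h s
    exact h (g s) (gI n g s).2
  · intro h v hv
    induction hv using Submodule.span_induction with
    | mem w hw =>
      obtain ⟨γ, r, rfl⟩ := hw
      rw [← dAct_mul, mul_comm, dAct_mul, h r, dAct_zero_right]
    | zero => exact dAct_zero_right δ
    | add x y _ _ ihx ihy => rw [dAct_add_right, ihx, ihy, add_zero]
    | smul k x _ ih => rw [dAct_smul_right, ih, smul_zero]

theorem dAnn_eq_ker (f : MvPolynomial (Fin (n + 1) ⊕ Fin m) K)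
    (hf : f = ∑ r, X (Sum.inl r) * rename Sum.inr (g r)) :
    dAnn f = RingHom.ker (Phi n g) := by
  ext δ
  rw [RingHom.mem_ker, mem_dAnn, Phi_apply, dAct_f_eq n g f hf δ]
  constructor
  · intro H
    obtain ⟨h1, h2⟩ := sep_zero n _ _ H
    have hann : part 0 δ ∈ annDerivSpan n g :=
      (mem_annDerivSpan_iff n g _).mpr h1
    have hfst : Ideal.Quotient.mk (annDerivSpan n g) (part 0 δ) = 0 :=
      Ideal.Quotient.eq_zero_iff_mem.mpr hann
    have hsnd : sndC n g δ = 0 := Subtype.ext (by rw [sndC_coe]; exact h2)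
    rw [hfst, hsnd, TrivSqZeroExt.inl_zero, TrivSqZeroExt.inr_zero, add_zero]
  · intro H
    have hfst := congrArg TrivSqZeroExt.fst H
    have hsnd := congrArg TrivSqZeroExt.snd H
    simp only [TrivSqZeroExt.fst_add, TrivSqZeroExt.fst_inl, TrivSqZeroExt.fst_inr,
      add_zero, TrivSqZeroExt.fst_zero] at hfst
    simp only [TrivSqZeroExt.snd_add, TrivSqZeroExt.snd_inl, TrivSqZeroExt.snd_inr,
      zero_add, TrivSqZeroExt.snd_zero] at hsnd
    have h1 := (mem_annDerivSpan_iff n g _).mp (Ideal.Quotient.eq_zero_iff_mem.mp hfst)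
    have h2 : sndV n g δ = 0 := by rw [← sndC_coe, hsnd]; rfl
    rw [show (∑ s, (X (Sum.inl s) : MvPolynomial (Fin (n + 1) ⊕ Fin m) K)
        * rename Sum.inr (dAct (part 0 δ) (g s))) = 0 from
      Finset.sum_eq_zero fun s _ => by rw [h1 s, map_zero, mul_zero],
      h2, map_zero, add_zero]

theorem inr_mk_zero (hv : (0 : MvPolynomial (Fin m) K) ∈ derivSpan n g) :
    (TrivSqZeroExt.inr (⟨0, hv⟩ : ↥(derivSpan n g)) :
      TrivSqZeroExt (Aprime n g) ↥(derivSpan n g)) = 0 := by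
  rw [show (⟨0, hv⟩ : ↥(derivSpan n g)) = 0 from Subtype.ext rfl]
  exact TrivSqZeroExt.inr_zero _

theorem Phi_inr_surj (x : ↥(derivSpan n g)) :
    ∃ q, Phi n g q = TrivSqZeroExt.inr x := by
  obtain ⟨v, hv⟩ := x
  induction hv using Submodule.span_induction with
  | mem w hw =>
    obtain ⟨γ, r, hwe⟩ := hw
    refine ⟨X (Sum.inl r) * rename Sum.inr γ, ?_⟩
    rw [map_mul, show Phi n g (X (Sum.inl r)) = TrivSqZeroExt.inr (gI n g r) from by
        simp only [Phi, aeval_X]; rfl,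
      Phi_rename, TrivSqZeroExt.inr_mul_inl, op_smul_eq_smul, mk_smul_I]
    exact congrArg _ (Subtype.ext hwe.symm)
  | zero =>
    refine ⟨0, ?_⟩
    rw [map_zero]
    exact (inr_mk_zero n g _).symm
  | add x y hx hy ihx ihy =>
    obtain ⟨q1, h1⟩ := ihx
    obtain ⟨q2, h2⟩ := ihy
    refine ⟨q1 + q2, ?_⟩
    rw [map_add, h1, h2, ← TrivSqZeroExt.inr_add]
    exact congrArg _ (Subtype.ext rfl)
  | smul a x hx ih =>
    obtain ⟨q, hq⟩ := ih
    refine ⟨a • q, ?_⟩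
    rw [map_smul, hq, ← TrivSqZeroExt.inr_smul]
    exact congrArg _ (Subtype.ext rfl)

theorem Phi_surjective : Function.Surjective (Phi n g) := by
  intro z
  obtain ⟨p, hp⟩ := Ideal.Quotient.mk_surjective (TrivSqZeroExt.fst z)
  obtain ⟨q, hq⟩ := Phi_inr_surj n g (TrivSqZeroExt.snd z)
  refine ⟨rename Sum.inr p + q, ?_⟩
  rw [map_add, Phi_rename, hp, hq]
  exact TrivSqZeroExt.inl_fst_add_inr_snd_eq z

end KerAux

theorem stmt_12 (n d : ℕ) (g : Fin (n + 1) → MvPolynomial (Fin m) K)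
    (hg : ∀ r, (g r).IsHomogeneous d)
    (f : MvPolynomial (Fin (n + 1) ⊕ Fin m) K)
    (hf : f = ∑ r, MvPolynomial.X (Sum.inl r) *
      MvPolynomial.rename Sum.inr (g r)) :
    Nonempty ((MvPolynomial (Fin (n + 1) ⊕ Fin m) K ⧸ dAnn f) ≃ₐ[K]
      TrivSqZeroExt (Aprime n g) ↥(derivSpan n g)) := by
  exact ⟨(Ideal.quotientEquivAlgOfEq K (dAnn_eq_ker n g f hf)).trans
    (Ideal.quotientKerAlgEquivOfSurjective (Phi_surjective n g))⟩

end Idealization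

end CW
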